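/- (Log inverts Exp.) Let X be a real N×q matrix with orthonormal columns, U a real N×q matrix with UᵀU = I_q and XᵀU = 0, V a q×q orthogonal matrix, and Σ = diag(σ₁,…,σ_q) with every σᵢ ∈ [0, π/2). Set Y = X V cos(Σ) + U sin(Σ). Then XᵀY = V cos(Σ) is invertible and (I − XXᵀ) Y (XᵀY)⁻¹ = U tan(Σ) Vᵀ. Consequently, applying the logarithmic map formula Γ = U′ arctan(Σ′) V′ᵀ to a thin SVD U′Σ′V′ᵀ = U tan(Σ) Vᵀ of this matrix recovers the original initial velocity U Σ Vᵀ. -/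

import Mathlib

open Matrix Polynomial

lemma ortho_conj_pow {q : ℕ} (W A : Matrix (Fin q) (Fin q) ℝ) (hW : W * Wᵀ = 1) (n : ℕ) :
    (W * A * Wᵀ) ^ n = W * A ^ n * Wᵀ := by
  induction n with
  | zero => simp [hW]
  | succ n ih =>
      rw [pow_succ, ih, pow_succ]
      calc W * A ^ n * Wᵀ * (W * A * Wᵀ) = W * A ^ n * (Wᵀ * W) * A * Wᵀ := by
            simp only [Matrix.mul_assoc]
        _ = W * (A ^ n * A) * Wᵀ := by
            rw [mul_eq_one_comm.mp hW]
            simp only [Matrix.mul_assoc, Matrix.mul_one]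

lemma ortho_conj_aeval {q : ℕ} (W : Matrix (Fin q) (Fin q) ℝ) (hW : W * Wᵀ = 1)
    (d : Fin q → ℝ) (p : Polynomial ℝ) :
    Polynomial.aeval (W * Matrix.diagonal d * Wᵀ) p
      = W * Matrix.diagonal (fun i => p.eval (d i)) * Wᵀ := by
  induction p using Polynomial.induction_on' with
  | add p r hp hr =>
      simp only [map_add, hp, hr, eval_add]
      have : Matrix.diagonal (fun i => eval (d i) p + eval (d i) r)
          = Matrix.diagonal (fun i => eval (d i) p) + Matrix.diagonal (fun i => eval (d i) r) := by
        simp [Matrix.diagonal_add]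
      rw [this, Matrix.mul_add, Matrix.add_mul]
  | monomial n a =>
      rw [aeval_monomial, ortho_conj_pow W _ hW]
      have h1 : Matrix.diagonal (fun i => eval (d i) (monomial n a))
          = a • (Matrix.diagonal d) ^ n := by
        rw [Matrix.diagonal_pow, ← Matrix.diagonal_smul]
        rw [show (fun i => eval (d i) (monomial n a)) = fun i => (a • d ^ n) i from
          funext fun i => by simp [eval_monomial, mul_comm]]
      rw [h1]
      have : (algebraMap ℝ (Matrix (Fin q) (Fin q) ℝ)) a = a • 1 := by
        simp [Algebra.algebraMap_eq_smul_one]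
      rw [this]
      simp [Matrix.smul_mul, Matrix.mul_smul, smul_mul_assoc]

/-- Log inverts Exp. With σᵢ ∈ [0, π/2) and Y = X V cos(Σ) + U sin(Σ):
XᵀY = V cos(Σ) is invertible, (I − XXᵀ) Y (XᵀY)⁻¹ = U tan(Σ) Vᵀ, and applying the log-map
formula to any thin SVD U′Σ′V′ᵀ of this matrix recovers the initial velocity U Σ Vᵀ. -/
theorem log_inverts_exp
    (N q : ℕ) (X U : Matrix (Fin N) (Fin q) ℝ)
    (V : Matrix (Fin q) (Fin q) ℝ) (σ : Fin q → ℝ)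
    (hX : Xᵀ * X = 1) (hU : Uᵀ * U = 1) (hXU : Xᵀ * U = 0)
    (hV : Vᵀ * V = 1) (hσ : ∀ i, σ i ∈ Set.Ico 0 (Real.pi / 2)) :
    Xᵀ * (X * V * Matrix.diagonal (fun i => Real.cos (σ i))
            + U * Matrix.diagonal (fun i => Real.sin (σ i)))
        = V * Matrix.diagonal (fun i => Real.cos (σ i)) ∧
    IsUnit (V * Matrix.diagonal (fun i => Real.cos (σ i))) ∧
    (1 - X * Xᵀ) * (X * V * Matrix.diagonal (fun i => Real.cos (σ i))
            + U * Matrix.diagonal (fun i => Real.sin (σ i)))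
        * (V * Matrix.diagonal (fun i => Real.cos (σ i)))⁻¹
      = U * Matrix.diagonal (fun i => Real.tan (σ i)) * Vᵀ ∧
    (∀ (U' : Matrix (Fin N) (Fin q) ℝ) (V' : Matrix (Fin q) (Fin q) ℝ)
        (d' : Fin q → ℝ),
      U'ᵀ * U' = 1 → V'ᵀ * V' = 1 → (∀ i, 0 ≤ d' i) →
      U' * Matrix.diagonal d' * V'ᵀ
          = U * Matrix.diagonal (fun i => Real.tan (σ i)) * Vᵀ →
      U' * Matrix.diagonal (fun i => Real.arctan (d' i)) * V'ᵀ
          = U * Matrix.diagonal σ * Vᵀ) := by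
  have hpi : 0 < Real.pi / 2 := by positivity
  have hcos : ∀ i, 0 < Real.cos (σ i) := fun i =>
    Real.cos_pos_of_mem_Ioo ⟨lt_of_lt_of_le (neg_neg_of_pos hpi) (hσ i).1, (hσ i).2⟩
  have hVV : V * Vᵀ = 1 := mul_eq_one_comm.mp hV
  set C : Matrix (Fin q) (Fin q) ℝ := Matrix.diagonal (fun i => Real.cos (σ i)) with hC
  set Cinv : Matrix (Fin q) (Fin q) ℝ := Matrix.diagonal (fun i => (Real.cos (σ i))⁻¹) with hCi
  have hright : (V * C) * (Cinv * Vᵀ) = 1 := by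
    have h1 : C * Cinv = 1 := by
      rw [hC, hCi, Matrix.diagonal_mul_diagonal]
      rw [show (fun i => Real.cos (σ i) * (Real.cos (σ i))⁻¹) = fun _ => (1:ℝ) from
        funext fun i => mul_inv_cancel₀ (hcos i).ne']
      exact Matrix.diagonal_one
    calc V * C * (Cinv * Vᵀ) = V * (C * Cinv) * Vᵀ := by simp only [Matrix.mul_assoc]
      _ = 1 := by rw [h1, Matrix.mul_one, hVV]
  have hinv : (V * C)⁻¹ = Cinv * Vᵀ := Matrix.inv_eq_right_inv hright
  refine ⟨?_, ((Matrix.isUnit_iff_isUnit_det _).mpr (Matrix.isUnit_det_of_right_inverse hright)), ?_, ?_⟩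
  · simp only [Matrix.mul_add, ← Matrix.mul_assoc, hX, hXU, Matrix.one_mul,
      Matrix.zero_mul, add_zero]
  · have e2 : (1 - X * Xᵀ) * (X * V * C + U * Matrix.diagonal (fun i => Real.sin (σ i)))
        = U * Matrix.diagonal (fun i => Real.sin (σ i)) := by
      have hXX : X * Xᵀ * X = X := by rw [Matrix.mul_assoc, hX, Matrix.mul_one]
      have hXXU : X * Xᵀ * U = 0 := by rw [Matrix.mul_assoc, hXU, Matrix.mul_zero]
      simp only [Matrix.sub_mul, Matrix.one_mul, Matrix.mul_add, ← Matrix.mul_assoc,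
        hXX, hXXU, Matrix.zero_mul, add_zero, add_sub_cancel_left, sub_self, sub_zero, zero_add]
    rw [e2, hinv]
    have h3 : Matrix.diagonal (fun i => Real.sin (σ i)) * Cinv
        = Matrix.diagonal (fun i => Real.tan (σ i)) := by
      rw [hCi, Matrix.diagonal_mul_diagonal]
      rw [show (fun i => Real.sin (σ i) * (Real.cos (σ i))⁻¹)
          = (fun i => Real.tan (σ i)) from
        funext fun i => by rw [Real.tan_eq_sin_div_cos, div_eq_mul_inv]]
    calc U * Matrix.diagonal (fun i => Real.sin (σ i)) * (Cinv * Vᵀ)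
        = U * (Matrix.diagonal (fun i => Real.sin (σ i)) * Cinv) * Vᵀ := by
          simp only [Matrix.mul_assoc]
      _ = U * Matrix.diagonal (fun i => Real.tan (σ i)) * Vᵀ := by
          rw [h3]
  · intro U' V' d' hU' hV' hd' hM
    set t : Fin q → ℝ := fun i => Real.tan (σ i) with htdef
    have ht : ∀ i, 0 ≤ t i := fun i => by
      show (0:ℝ) ≤ Real.tan (σ i)
      rw [Real.tan_eq_sin_div_cos]
      exact div_nonneg (Real.sin_nonneg_of_nonneg_of_le_pi (hσ i).1
        (le_trans (hσ i).2.le (by linarith [Real.pi_pos]))) (hcos i).le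
    set g : ℝ → ℝ := fun x => Real.arctan (Real.sqrt x) / Real.sqrt x with hg
    have key : ∀ c : ℝ, 0 ≤ c → c * g (c * c) = Real.arctan c := by
      intro c hc
      rcases eq_or_lt_of_le hc with h | h
      · simp [← h]
      · rw [hg]
        simp only
        rw [Real.sqrt_mul_self hc]
        field_simp
    have key2 : ∀ i, t i * g (t i * t i) = σ i := by
      intro i
      rw [key (t i) (ht i)]
      show Real.arctan (Real.tan (σ i)) = σ i
      exact Real.arctan_tan (by linarith [(hσ i).1]) ((hσ i).2)
    set nodes : Finset ℝ :=
      (Finset.univ.image fun i => d' i * d' i) ∪ (Finset.univ.image fun i => t i * t i)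
      with hnodes
    set p : Polynomial ℝ := Lagrange.interpolate nodes id g with hp
    have hnode : ∀ x ∈ nodes, p.eval x = g x := fun x hx => by
      rw [hp]
      exact Lagrange.eval_interpolate_at_node g (Set.injOn_id _) hx
    -- general lemma applied to both factorizations
    have general : ∀ (A : Matrix (Fin N) (Fin q) ℝ) (B : Matrix (Fin q) (Fin q) ℝ)
        (e : Fin q → ℝ), Aᵀ * A = 1 → Bᵀ * B = 1 → (∀ i, e i * e i ∈ nodes) →
        A * Matrix.diagonal (fun i => e i * g (e i * e i)) * Bᵀ
          = (A * Matrix.diagonal e * Bᵀ)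
            * Polynomial.aeval
              ((A * Matrix.diagonal e * Bᵀ)ᵀ * (A * Matrix.diagonal e * Bᵀ)) p := by
      intro A B e hA hB he
      have hBB : B * Bᵀ = 1 := mul_eq_one_comm.mp hB
      have hMM : (A * Matrix.diagonal e * Bᵀ)ᵀ * (A * Matrix.diagonal e * Bᵀ)
          = B * Matrix.diagonal (fun i => e i * e i) * Bᵀ := by
        rw [Matrix.transpose_mul, Matrix.transpose_mul, Matrix.transpose_transpose,
          Matrix.diagonal_transpose]
        calc B * (Matrix.diagonal e * Aᵀ) * (A * Matrix.diagonal e * Bᵀ)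
            = B * (Matrix.diagonal e * ((Aᵀ * A) * (Matrix.diagonal e * Bᵀ))) := by
              simp only [Matrix.mul_assoc]
          _ = B * Matrix.diagonal (fun i => e i * e i) * Bᵀ := by
              rw [hA, Matrix.one_mul, ← Matrix.mul_assoc (Matrix.diagonal e),
                Matrix.diagonal_mul_diagonal]
              simp only [Matrix.mul_assoc]
      rw [hMM, ortho_conj_aeval B hBB]
      symm
      calc A * Matrix.diagonal e * Bᵀ
              * (B * Matrix.diagonal (fun i => p.eval (e i * e i)) * Bᵀ)
          = A * (Matrix.diagonal e * ((Bᵀ * B)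
              * (Matrix.diagonal (fun i => p.eval (e i * e i)) * Bᵀ))) := by
            simp only [Matrix.mul_assoc]
        _ = A * (Matrix.diagonal e * Matrix.diagonal (fun i => p.eval (e i * e i)) * Bᵀ) := by
            rw [hB, Matrix.one_mul, Matrix.mul_assoc]
        _ = A * Matrix.diagonal (fun i => e i * g (e i * e i)) * Bᵀ := by
            rw [Matrix.diagonal_mul_diagonal]
            rw [show (fun i => e i * p.eval (e i * e i))
                = fun i => e i * g (e i * e i) from
              funext fun i => by rw [hnode _ (he i)]]
            simp only [Matrix.mul_assoc]
    have mem1 : ∀ i, d' i * d' i ∈ nodes := fun i =>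
      Finset.mem_union_left _ (Finset.mem_image_of_mem _ (Finset.mem_univ i))
    have mem2 : ∀ i, t i * t i ∈ nodes := fun i =>
      Finset.mem_union_right _ (Finset.mem_image_of_mem _ (Finset.mem_univ i))
    have L : U' * Matrix.diagonal (fun i => Real.arctan (d' i)) * V'ᵀ
        = (U' * Matrix.diagonal d' * V'ᵀ)
          * Polynomial.aeval ((U' * Matrix.diagonal d' * V'ᵀ)ᵀ
              * (U' * Matrix.diagonal d' * V'ᵀ)) p := by
      rw [show (fun i => Real.arctan (d' i)) = fun i => d' i * g (d' i * d' i) from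
        funext fun i => (key (d' i) (hd' i)).symm]
      exact general U' V' d' hU' hV' mem1
    have R : U * Matrix.diagonal σ * Vᵀ
        = (U * Matrix.diagonal t * Vᵀ)
          * Polynomial.aeval ((U * Matrix.diagonal t * Vᵀ)ᵀ
              * (U * Matrix.diagonal t * Vᵀ)) p := by
      rw [show σ = fun i => t i * g (t i * t i) from funext fun i => (key2 i).symm]
      exact general U V t hU hV mem2
    rw [L, R, hM]
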